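/- arXiv:2309.08161 — 4 statements merged into one kernel-verified Lean document; each statement's English description precedes it below -/
import Mathlib

section
/- Let X be a set equipped with k binary operations ▷₁,…,▷ₖ such that each (X, ▷ₘ) is a quandle, and let i, j ∈ {1,…,k}. Suppose that for all x, y, z ∈ X one has (x ▷ᵢ⁻¹ y) ▷ⱼ⁻¹ z = (x ▷ⱼ⁻¹ z) ▷ᵢ⁻¹ (y ▷ⱼ⁻¹ z). Then for all x, y, z ∈ X: (x ▷ᵢ y) ▷ⱼ z = (x ▷ⱼ z) ▷ᵢ (y ▷ⱼ z). -/
/-- Let `X` carry `k` binary operations `▷₁, …, ▷ₖ` such that each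
`(X, ▷ₘ)` is a quandle, and let `i, j` be indices.  If
`(x ▷ᵢ⁻¹ y) ▷ⱼ⁻¹ z = (x ▷ⱼ⁻¹ z) ▷ᵢ⁻¹ (y ▷ⱼ⁻¹ z)` for all `x, y, z`, then
`(x ▷ᵢ y) ▷ⱼ z = (x ▷ⱼ z) ▷ᵢ (y ▷ⱼ z)` for all `x, y, z`. -/
theorem quandles_inv_dist_imp₃ {X : Type*} {k : ℕ}
    (op inv : Fin k → X → X → X)
    (hidem : ∀ m x, op m x x = x)
    (hinv_right : ∀ m x y, op m (inv m x y) y = x)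
    (hinv_left : ∀ m x y, inv m (op m x y) y = x)
    (hself_dist : ∀ m x y z, op m (op m x y) z = op m (op m x z) (op m y z))
    (i j : Fin k)
    (h : ∀ x y z : X, inv j (inv i x y) z = inv i (inv j x z) (inv j y z)) :
    ∀ x y z : X, op j (op i x y) z = op i (op j x z) (op j y z) := by
  -- key: inv j (op i a b) z = op i (inv j a z) (inv j b z)
  have key : ∀ a b z : X, inv j (op i a b) z = op i (inv j a z) (inv j b z) := by
    intro a b z
    have h1 := h (op i a b) b z
    rw [hinv_left] at h1
    have h2 : op i (inv i (inv j (op i a b) z) (inv j b z)) (inv j b z)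
        = op i (inv j a z) (inv j b z) := by rw [← h1]
    rwa [hinv_right] at h2
  intro x y z
  have := key (op j x z) (op j y z) z
  rw [hinv_left, hinv_left] at this
  calc op j (op i x y) z = op j (inv j (op i (op j x z) (op j y z)) z) z := by rw [this]
    _ = op i (op j x z) (op j y z) := hinv_right _ _ _
end

section
/- Let G be a cyclic (hence commutative) group and let σ, τ : G → G be group automorphisms. Define x ▷₁ y = σ(y)⁻¹ σ(x) y and x ▷₂ y = τ(y)⁻¹ τ(x) y. Then: (a) x ▷ᵢ x = x for all x and i ∈ {1,2}; (b) for every y and each i ∈ {1,2}, the right translation x ↦ x ▷ᵢ y is a bijection of G; and (c) for all i, j ∈ {1,2} and all x, y, z ∈ G, (x ▷ᵢ y) ▷ⱼ z = (x ▷ⱼ z) ▷ᵢ (y ▷ⱼ z). In particular (G, ▷₁, ▷₂) is a diquandle. -/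
/-- Automorphisms of a cyclic group commute with each other. -/
private lemma aut_comm_cyclic {G : Type*} [Group G] [IsCyclic G]
    (σ τ : G ≃* G) (x : G) : σ (τ x) = τ (σ x) := by
  obtain ⟨g, hg⟩ := IsCyclic.exists_generator (α := G)
  obtain ⟨m, hm⟩ := hg (σ g)
  obtain ⟨n, hn⟩ := hg (τ g)
  obtain ⟨k, hk⟩ := hg x
  simp only at hm hn hk
  subst hk
  calc σ (τ (g ^ k)) = g ^ (m * (n * k)) := by
        rw [map_zpow, ← hn, ← zpow_mul, map_zpow, ← hm, ← zpow_mul]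
    _ = g ^ (n * (m * k)) := by ring_nf
    _ = τ (σ (g ^ k)) := by
        rw [map_zpow (f := σ), ← hm, ← zpow_mul, map_zpow, ← hn, ← zpow_mul]

private lemma key_distrib {G : Type*} [CommGroup G]
    (φ ψ : G ≃* G) (hc : ∀ x : G, ψ (φ x) = φ (ψ x)) (x y z : G) :
    (ψ z)⁻¹ * ψ ((φ y)⁻¹ * φ x * y) * z =
      (φ ((ψ z)⁻¹ * ψ y * z))⁻¹ * φ ((ψ z)⁻¹ * ψ x * z) * ((ψ z)⁻¹ * ψ y * z) := by
  simp only [map_mul, map_inv, hc, mul_inv_rev, inv_inv]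
  apply Additive.ofMul.injective
  simp only [ofMul_mul, ofMul_inv]
  abel

/-- Let `G` be a cyclic group and `σ, τ` automorphisms of `G`.
With `x ▷₁ y = σ(y)⁻¹ σ(x) y` and `x ▷₂ y = τ(y)⁻¹ τ(x) y` one has:
(a) `x ▷ᵢ x = x`; (b) each right translation `x ↦ x ▷ᵢ y` is a bijection of `G`;
(c) `(x ▷ᵢ y) ▷ⱼ z = (x ▷ⱼ z) ▷ᵢ (y ▷ⱼ z)` for all `i, j ∈ {1,2}`.
Hence `(G, ▷₁, ▷₂)` is a diquandle. -/
theorem cyclic_group_diquandle {G : Type*} [Group G] [IsCyclic G]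
    (σ τ : G ≃* G) :
    let op : Fin 2 → G → G → G :=
      ![fun x y => (σ y)⁻¹ * σ x * y, fun x y => (τ y)⁻¹ * τ x * y]
    (∀ (i : Fin 2) (x : G), op i x x = x) ∧
    (∀ (i : Fin 2) (y : G), Function.Bijective (fun x : G => op i x y)) ∧
    (∀ (i j : Fin 2) (x y z : G),
      op j (op i x y) z = op i (op j x z) (op j y z)) := by
  letI : CommGroup G := IsCyclic.commGroup
  intro op
  refine ⟨?_, ?_, ?_⟩
  · intro i x
    fin_cases i <;> simp [op]
  · intro i y
    have h : ∀ (φ : G ≃* G), Function.Bijective (fun x : G => (φ y)⁻¹ * φ x * y) := by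
      intro φ
      have : (fun x : G => (φ y)⁻¹ * φ x * y)
          = (fun a : G => (φ y)⁻¹ * a * y) ∘ φ := rfl
      rw [this]
      exact (((Equiv.mulLeft ((φ y)⁻¹)).trans (Equiv.mulRight y)).bijective).comp φ.bijective
    fin_cases i <;> simpa [op] using h _
  · intro i j x y z
    fin_cases i <;> fin_cases j <;>
      simp only [op, Matrix.cons_val_zero, Matrix.cons_val_one, Matrix.head_cons] <;>
      [exact key_distrib σ σ (fun _ => rfl) x y z;
       exact key_distrib σ τ (fun a => aut_comm_cyclic τ σ a) x y z;
       exact key_distrib τ σ (fun a => aut_comm_cyclic σ τ a) x y z;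
       exact key_distrib τ τ (fun _ => rfl) x y z]
end

section
/- Let (Q, ▷) be a quandle, let n ≥ 1, and let β : Qⁿ → Qⁿ be any map. Define σ : Q^{n+1} → Q^{n+1} by σ(y₁,…,y_{n−1}, yₙ, y_{n+1}) = (y₁,…,y_{n−1}, y_{n+1}, yₙ ▷ y_{n+1}), and define β′ : Q^{n+1} → Q^{n+1} by β′(x₁,…,x_{n+1}) = σ(β(x₁,…,xₙ), x_{n+1}), i.e., β′ applies β to the first n coordinates and then σ. Then a point (x₁,…,xₙ) ∈ Qⁿ is a fixed point of β if and only if (x₁,…,xₙ, xₙ) ∈ Q^{n+1} is a fixed point of β′; moreover the map (x₁,…,xₙ) ↦ (x₁,…,xₙ, xₙ) is a bijection from the fixed point set of β onto the fixed point set of β′. -/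
/-- **Markov stabilisation and fixed points.**
Let `(Q, ▷)` be a quandle, `n ≥ 1`, and `β : Qⁿ → Qⁿ` any map.  Identify
`Q^{n+1}` with `(Fin n → Q) × Q` (first `n` coordinates, then the last one).
Let `σ` swap the last two coordinates with a crossing,
`σ(y₁,…,y_{n-1},yₙ,y_{n+1}) = (y₁,…,y_{n-1},y_{n+1}, yₙ ▷ y_{n+1})`, and let
`β' = σ ∘ (β × id)`.  Then `x ∈ Qⁿ` is a fixed point of `β` iff `(x, xₙ)` is a
fixed point of `β'`, and `x ↦ (x, xₙ)` is a bijection from `Fix β` onto `Fix β'`. -/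
theorem stabilisation_fixedPoints {Q : Type*} (op : Q → Q → Q)
    (hidem : ∀ x, op x x = x)
    (hbij : ∀ y, Function.Bijective (fun x => op x y))
    (hdist : ∀ x y z, op (op x y) z = op (op x z) (op y z))
    (n : ℕ) (hn : 0 < n) (β : (Fin n → Q) → (Fin n → Q)) :
    let last : Fin n := ⟨n - 1, Nat.sub_lt hn one_pos⟩
    let σ : (Fin n → Q) × Q → (Fin n → Q) × Q :=
      fun p => (Function.update p.1 last p.2, op (p.1 last) p.2)
    let β' : (Fin n → Q) × Q → (Fin n → Q) × Q :=
      fun p => σ (β p.1, p.2)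
    (∀ x : Fin n → Q, β x = x ↔ β' (x, x last) = (x, x last)) ∧
    Set.BijOn (fun x : Fin n → Q => ((x, x last) : (Fin n → Q) × Q))
      {x | β x = x} {p | β' p = p} := by
  intro last σ β'
  have key : ∀ x : Fin n → Q, β x = x ↔ β' (x, x last) = (x, x last) := by
    intro x
    constructor
    · intro h
      simp only [β', σ, h, Prod.mk.injEq, hidem]
      exact ⟨Function.update_eq_self _ _, trivial⟩
    · intro h
      simp only [β', σ, Prod.mk.injEq] at h
      obtain ⟨h1, h2⟩ := h
      have hlast : β x last = x last := by
        have : op (β x last) (x last) = op (x last) (x last) := by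
          rw [h2, hidem]
        exact (hbij (x last)).1 this
      funext i
      by_cases hi : i = last
      · rw [hi, hlast]
      · have := congrFun h1 i
        rwa [Function.update_of_ne hi] at this
  refine ⟨key, ?_, ?_, ?_⟩
  · intro x hx
    exact (key x).1 hx
  · intro x _ y _ h
    exact congrArg Prod.fst h
  · rintro ⟨y, t⟩ hp
    simp only [Set.mem_setOf_eq, β', σ, Prod.mk.injEq] at hp
    obtain ⟨h1, h2⟩ := hp
    have hyt : y last = t := by
      have := congrFun h1 last
      rw [Function.update_self] at this; exact this.symm
    have hblast : β y last = t := by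
      have : op (β y last) t = op t t := by rw [h2, hidem]
      exact (hbij t).1 this
    have hβ : β y = y := by
      funext i
      by_cases hi : i = last
      · rw [hi, hblast, hyt]
      · have := congrFun h1 i
        rwa [Function.update_of_ne hi] at this
    refine ⟨y, hβ, ?_⟩
    simp [hyt]
end

section
/- Let a, b, c be unit vectors in the Euclidean plane ℝ² (i.e., ‖a‖ = ‖b‖ = ‖c‖ = 1), and define x ▷₂ y = 2⟨x,y⟩y − x and x ▷₁ y = x. Then the system of equations a ▷₂ b = a, c ▷₂ b = c, and (b ▷₁ c) ▷₂ a = b holds if and only if (a = b or a = −b) and (c = b or c = −b). Consequently the solution set {(a,b,c) ∈ S¹ × S¹ × S¹ : a ▷₂ b = a, c ▷₂ b = c, (b ▷₁ c) ▷₂ a = b} is the union of four disjoint circles. -/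
/-- The trivial quandle operation `x ▷₁ y = x`. -/
def circOp1 (x _y : EuclideanSpace ℝ (Fin 2)) : EuclideanSpace ℝ (Fin 2) := x

/-- The reflection quandle operation `x ▷₂ y = 2⟨x,y⟩y − x` on the plane. -/
noncomputable def circOp2 (x y : EuclideanSpace ℝ (Fin 2)) :
    EuclideanSpace ℝ (Fin 2) :=
  (2 * (inner ℝ x y : ℝ)) • y - x

lemma circOp2_fixed_iff (x y : EuclideanSpace ℝ (Fin 2)) (hx : ‖x‖ = 1) (hy : ‖y‖ = 1) :
    circOp2 x y = x ↔ (x = y ∨ x = -y) := by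
  unfold circOp2
  constructor
  · intro h
    set t : ℝ := inner ℝ x y with ht
    have h2 : t • y = x := by
      have h1 : (2 : ℝ) • (t • y) = (2 : ℝ) • x := by
        rw [smul_smul, sub_eq_iff_eq_add] at *
        rw [h]; module
      exact smul_right_injective (EuclideanSpace ℝ (Fin 2)) (two_ne_zero (α := ℝ)) h1
    have hnt : |t| = 1 := by
      have := congrArg norm h2
      rwa [norm_smul, hy, mul_one, hx, Real.norm_eq_abs] at this
    rcases abs_eq (by norm_num : (0:ℝ) ≤ 1) |>.mp hnt with h1 | h1
    · left; rw [← h2, h1, one_smul]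
    · right; rw [← h2, h1]; module
  · intro h
    have self : ∀ z : EuclideanSpace ℝ (Fin 2), ‖z‖ = 1 →
        (2 * (inner ℝ z z : ℝ)) • z - z = z := by
      intro z hz
      have : (inner ℝ z z : ℝ) = 1 := by
        rw [real_inner_self_eq_norm_sq, hz]; norm_num
      rw [this]; module
    have negself : ∀ z : EuclideanSpace ℝ (Fin 2), ‖z‖ = 1 →
        (2 * (inner ℝ (-z) z : ℝ)) • z - (-z) = -z := by
      intro z hz
      have : (inner ℝ (-z) z : ℝ) = -1 := by
        rw [inner_neg_left, real_inner_self_eq_norm_sq, hz]; norm_num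
      rw [this]; module
    rcases h with h | h <;> subst h
    · exact self x hx
    · first
      | exact negself x hx
      | exact negself y hy

noncomputable abbrev S1 := Metric.sphere (0 : EuclideanSpace ℝ (Fin 2)) 1

/-- sign maps on the circle -/
noncomputable def en : Bool → S1 → S1
  | true => id
  | false => Neg.neg

lemma en_continuous (b : Bool) : Continuous (en b) := by
  cases b
  · exact continuous_neg
  · exact continuous_id

lemma en_injective_sign {b b' : Bool} (c : S1) (h : en b c = en b' c) : b = b' := by
  cases b <;> cases b' <;> try rfl
  all_goals {
    exfalso
    have hc : (c : EuclideanSpace ℝ (Fin 2)) = -(c : EuclideanSpace ℝ (Fin 2)) := by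
      have := congrArg (Subtype.val) h
      simp [en, coe_neg_sphere] at this
      first
      | exact this
      | exact this.symm
    have hc0 : (c : EuclideanSpace ℝ (Fin 2)) = 0 := by
      have h2 : (c : EuclideanSpace ℝ (Fin 2)) + c = 0 := by
        nth_rewrite 1 [hc]; simp
      have : (2 : ℝ) • (c : EuclideanSpace ℝ (Fin 2)) = 0 := by
        rw [two_smul]; exact h2
      simpa using (smul_eq_zero.mp this).resolve_left (by norm_num)
    have := c.2
    rw [mem_sphere_zero_iff_norm] at this
    rw [hc0] at this
    simp at this }

lemma coe_en (b : Bool) (c : S1) :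
    (en b c : EuclideanSpace ℝ (Fin 2)) = if b then (c : EuclideanSpace ℝ (Fin 2)) else -c := by
  cases b <;> simp [en, coe_neg_sphere]

/-- the generic circle component -/
def Tset (f g : S1 → S1) : Set (S1 × S1 × S1) :=
  {p | p.1 = f p.2.1 ∧ p.2.2 = g p.2.1}

noncomputable def bits : Fin 4 → Bool × Bool := ![(true, true), (true, false), (false, true), (false, false)]

lemma bits_injective : Function.Injective bits := by decide

noncomputable def Tcomp (i : Fin 4) : Set (S1 × S1 × S1) := Tset (en (bits i).1) (en (bits i).2)

noncomputable def tsetHomeo (f g : S1 → S1) (hf : Continuous f) (hg : Continuous g) :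
    (Tset f g) ≃ₜ S1 where
  toFun p := p.1.2.1
  invFun c := ⟨(f c, c, g c), ⟨rfl, rfl⟩⟩
  left_inv p := by
    obtain ⟨⟨a, b, c⟩, h1, h2⟩ := p
    simp only [Tset, Set.mem_setOf_eq] at h1 h2
    simp only at h1 h2 ⊢
    subst h1 h2
    rfl
  right_inv c := rfl
  continuous_toFun := (continuous_fst.comp continuous_snd).comp continuous_subtype_val
  continuous_invFun := by
    apply Continuous.subtype_mk
    exact hf.prodMk (continuous_id.prodMk hg)

/-- For unit vectors `a, b, c` in the plane, the coloring system
`a ▷₂ b = a`, `c ▷₂ b = c`, `(b ▷₁ c) ▷₂ a = b` holds iff `(a = b ∨ a = −b)` and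
`(c = b ∨ c = −b)`.  Consequently the solution set inside `S¹ × S¹ × S¹` is a
disjoint union of four circles. -/
theorem dichromatic_link_L2_invariant :
    (∀ a b c : EuclideanSpace ℝ (Fin 2), ‖a‖ = 1 → ‖b‖ = 1 → ‖c‖ = 1 →
      ((circOp2 a b = a ∧ circOp2 c b = c ∧ circOp2 (circOp1 b c) a = b) ↔
        ((a = b ∨ a = -b) ∧ (c = b ∨ c = -b)))) ∧
    ∃ T : Fin 4 →
        Set (Metric.sphere (0 : EuclideanSpace ℝ (Fin 2)) 1 ×
          Metric.sphere (0 : EuclideanSpace ℝ (Fin 2)) 1 ×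
          Metric.sphere (0 : EuclideanSpace ℝ (Fin 2)) 1),
      ({p | circOp2 (p.1 : EuclideanSpace ℝ (Fin 2)) (p.2.1 : EuclideanSpace ℝ (Fin 2)) = p.1 ∧
            circOp2 (p.2.2 : EuclideanSpace ℝ (Fin 2)) (p.2.1 : EuclideanSpace ℝ (Fin 2)) = p.2.2 ∧
            circOp2 (circOp1 (p.2.1 : EuclideanSpace ℝ (Fin 2)) (p.2.2 : EuclideanSpace ℝ (Fin 2)))
              (p.1 : EuclideanSpace ℝ (Fin 2)) = p.2.1} = ⋃ i, T i) ∧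
      Pairwise (Function.onFun Disjoint T) ∧
      ∀ i, Nonempty ((T i) ≃ₜ Metric.sphere (0 : EuclideanSpace ℝ (Fin 2)) 1) := by
  have main : ∀ a b c : EuclideanSpace ℝ (Fin 2), ‖a‖ = 1 → ‖b‖ = 1 → ‖c‖ = 1 →
      ((circOp2 a b = a ∧ circOp2 c b = c ∧ circOp2 (circOp1 b c) a = b) ↔
        ((a = b ∨ a = -b) ∧ (c = b ∨ c = -b))) := by
    intro a b c ha hb hc
    constructor
    · rintro ⟨h1, h2, _⟩
      exact ⟨(circOp2_fixed_iff a b ha hb).mp h1, (circOp2_fixed_iff c b hc hb).mp h2⟩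
    · rintro ⟨h1, h2⟩
      refine ⟨(circOp2_fixed_iff a b ha hb).mpr h1, (circOp2_fixed_iff c b hc hb).mpr h2, ?_⟩
      show circOp2 b a = b
      refine (circOp2_fixed_iff b a hb ha).mpr ?_
      rcases h1 with rfl | rfl
      · exact Or.inl rfl
      · right; simp
  refine ⟨main, Tcomp, ?_, ?_, ?_⟩
  · ext p
    obtain ⟨a, b, c⟩ := p
    have ha := mem_sphere_zero_iff_norm.mp a.2
    have hb := mem_sphere_zero_iff_norm.mp b.2
    have hc := mem_sphere_zero_iff_norm.mp c.2
    simp only [Set.mem_setOf_eq, Set.mem_iUnion]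
    rw [main a b c ha hb hc]
    constructor
    · rintro ⟨h1 | h1, h2 | h2⟩
      · exact ⟨0, Subtype.ext (by simpa [coe_en, bits]), Subtype.ext (by simpa [coe_en, bits])⟩
      · exact ⟨1, Subtype.ext (by simpa [coe_en, bits]), Subtype.ext (by simpa [coe_en, bits])⟩
      · exact ⟨2, Subtype.ext (by simpa [coe_en, bits]), Subtype.ext (by simpa [coe_en, bits])⟩
      · exact ⟨3, Subtype.ext (by simpa [coe_en, bits]), Subtype.ext (by simpa [coe_en, bits])⟩
    · rintro ⟨i, h1, h2⟩
      have e1 := congrArg Subtype.val h1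
      have e2 := congrArg Subtype.val h2
      rw [coe_en] at e1 e2
      constructor
      · rcases Bool.eq_false_or_eq_true (bits i).1 with h | h <;> rw [h] at e1 <;>
          simp at e1 <;> [exact Or.inl e1; exact Or.inr e1]
      · rcases Bool.eq_false_or_eq_true (bits i).2 with h | h <;> rw [h] at e2 <;>
          simp at e2 <;> [exact Or.inl e2; exact Or.inr e2]
  · intro i j hij
    rw [Function.onFun, Set.disjoint_left]
    rintro ⟨a, b, c⟩ ⟨h1, h2⟩ ⟨h3, h4⟩
    simp only [Tcomp, Tset, Set.mem_setOf_eq] at h1 h2 h3 h4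
    apply hij
    apply bits_injective
    ext
    · exact en_injective_sign b (h1 ▸ h3 ▸ rfl)
    · exact en_injective_sign b (h2 ▸ h4 ▸ rfl)
  · intro i
    exact ⟨tsetHomeo _ _ (en_continuous _) (en_continuous _)⟩
end
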